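/- Let ε ∈ (0,1] and let S(x) = 6x⁴(1 − ε V(x/x₁)) for 0 ≤ x < x₁ and S(x) = 6x⁴ for x ≥ x₁, where x₁ = (3/5)^{1/8} and V(θ) = (7θ² − 3)(θ² − 1)³/3. Then S is nonnegative, nondecreasing, convex with respect to the logarithm, satisfies ∫₀¹ S(tx) x dx ≤ t⁴ for all t ≥ 0, and yet ∫₀^∞ S(t) t⁷/(1+t⁸)² dt > 3π/8. Hence S is a counterexample to Khabibullin's original conjecture with n = 2, λ = 4. -/

import Mathlib

open MeasureTheory Real Set

noncomputable def V (θ : ℝ) : ℝ := (7 * θ^2 - 3) * (θ^2 - 1)^3 / 3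

noncomputable def x₁ : ℝ := (3/5 : ℝ) ^ ((1:ℝ)/8)

noncomputable def S (ε x : ℝ) : ℝ :=
  if x < x₁ then 6 * x^4 * (1 - ε * V (x / x₁)) else 6 * x^4

lemma x₁_pos : (0:ℝ) < x₁ := Real.rpow_pos_of_pos (by norm_num) _

lemma x₁_ne : (x₁:ℝ) ≠ 0 := ne_of_gt x₁_pos

lemma x₁_lt_one : x₁ < 1 :=
  Real.rpow_lt_one (by norm_num) (by norm_num) (by norm_num)

lemma x₁_pow8 : x₁ ^ (8:ℕ) = 3/5 := by
  rw [x₁, ← Real.rpow_natCast ((3/5:ℝ) ^ ((1:ℝ)/8)) 8, ← Real.rpow_mul (by norm_num)]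
  norm_num

lemma x₁_pow8_ne : x₁ ^ (8:ℕ) ≠ 0 := pow_ne_zero _ x₁_ne

/-- The polynomial formula for `S` on `(-∞, x₁]`. -/
noncomputable def p (ε x : ℝ) : ℝ :=
  6*x^4 - 2*ε*(x^4*(7*x^2-3*x₁^2)*(x^2-x₁^2)^3)/x₁^8

lemma S_eq_p (ε : ℝ) {x : ℝ} (hx : x ≤ x₁) : S ε x = p ε x := by
  rcases lt_or_eq_of_le hx with h | h
  · rw [S, if_pos h, V, p]
    field_simp [x₁_ne]
    ring
  · subst h
    rw [S, if_neg (lt_irrefl _), p]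
    have : x₁^2 - x₁^2 = 0 := by ring
    rw [this]
    ring

lemma S_eq_six (ε : ℝ) {x : ℝ} (hx : x₁ ≤ x) : S ε x = 6 * x^4 := by
  rw [S, if_neg (not_lt.mpr hx)]

lemma continuous_S (ε : ℝ) : Continuous (S ε) := by
  have hS : S ε = fun x => if x₁ ≤ x then 6*x^4 else 6 * x^4 * (1 - ε * V (x / x₁)) := by
    funext x
    rcases le_or_gt x₁ x with h | h
    · rw [S, if_neg (not_lt.mpr h), if_pos h]
    · rw [S, if_pos h, if_neg (not_le.mpr h)]
  rw [hS]
  apply Continuous.if_le _ _ continuous_const continuous_id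
  · intro x hx
    have hx' : x = x₁ := hx.symm
    subst hx'
    rw [div_self x₁_ne]
    simp [V]
  · fun_prop
  · unfold V
    fun_prop

/-- derivative of `p`. -/
noncomputable def p' (ε x : ℝ) : ℝ :=
  24*x^3 - 24*ε*(x^3*(7*x^8-20*x₁^2*x^6+20*x₁^4*x^4-8*x₁^6*x^2+x₁^8))/x₁^8

lemma hasDerivAt_p (ε x : ℝ) : HasDerivAt (p ε) (p' ε x) x := by
  have h1 : HasDerivAt (fun x : ℝ => x^4*(7*x^2-3*x₁^2)*(x^2-x₁^2)^3)
      (((4:ℕ)*x^3*(7*x^2-3*x₁^2) + x^4*(7*((2:ℕ)*x^1))) * (x^2-x₁^2)^3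
        + x^4*(7*x^2-3*x₁^2) * ((3:ℕ)*(x^2-x₁^2)^2*((2:ℕ)*x^1))) x := by
    exact ((hasDerivAt_pow 4 x).mul (((hasDerivAt_pow 2 x).const_mul 7).sub_const (3*x₁^2))).mul
      (((hasDerivAt_pow 2 x).sub_const (x₁^2)).pow 3)
  have h2 := ((hasDerivAt_pow 4 x).const_mul (6:ℝ)).sub ((h1.const_mul (2*ε)).div_const (x₁^8))
  convert h2 using 1 <;> try rfl
  unfold p'
  push_cast
  ring

/-- `q ε x = p' ε x * x`, the derivative of `s ↦ p ε (exp s)` at `log x`. -/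
noncomputable def q (ε x : ℝ) : ℝ :=
  24*x^4 - 24*ε*(x^4*(7*x^8-20*x₁^2*x^6+20*x₁^4*x^4-8*x₁^6*x^2+x₁^8))/x₁^8

lemma q_eq (ε x : ℝ) : q ε x = p' ε x * x := by unfold q p'; ring

noncomputable def q' (ε x : ℝ) : ℝ :=
  96*x^3 - 96*ε*(x^3*(21*x^8-50*x₁^2*x^6+40*x₁^4*x^4-12*x₁^6*x^2+x₁^8))/x₁^8

lemma hasDerivAt_q (ε x : ℝ) : HasDerivAt (q ε) (q' ε x) x := by
  have h1 : HasDerivAt (fun x : ℝ => x^4*(7*x^8-20*x₁^2*x^6+20*x₁^4*x^4-8*x₁^6*x^2+x₁^8))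
      ((4:ℕ)*x^3*(7*x^8-20*x₁^2*x^6+20*x₁^4*x^4-8*x₁^6*x^2+x₁^8)
        + x^4*(7*((8:ℕ)*x^7)-20*x₁^2*((6:ℕ)*x^5)+20*x₁^4*((4:ℕ)*x^3)-8*x₁^6*((2:ℕ)*x^1)+0)) x := by
    refine (hasDerivAt_pow 4 x).mul ?_
    have h87 : (8:ℕ)*x^7 = ((8:ℕ):ℝ)*x^(8-1) := by norm_num
    have h65 : (6:ℕ)*x^5 = ((6:ℕ):ℝ)*x^(6-1) := by norm_num
    have h43 : (4:ℕ)*x^3 = ((4:ℕ):ℝ)*x^(4-1) := by norm_num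
    have h21 : (2:ℕ)*x^1 = ((2:ℕ):ℝ)*x^(2-1) := by norm_num
    exact (((((hasDerivAt_pow 8 x).const_mul 7).sub ((hasDerivAt_pow 6 x).const_mul (20*x₁^2))).add
      ((hasDerivAt_pow 4 x).const_mul (20*x₁^4))).sub
      ((hasDerivAt_pow 2 x).const_mul (8*x₁^6))).add_const (x₁^8) |>.congr_deriv (by push_cast; ring)
  have h2 := ((hasDerivAt_pow 4 x).const_mul (24:ℝ)).sub ((h1.const_mul (24*ε)).div_const (x₁^8))
  convert h2 using 1 <;> try rfl
  unfold q'
  push_cast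
  ring

lemma key_ineq {x : ℝ} (hx0 : 0 ≤ x) (hx1 : x ≤ x₁) :
    x^2*(7*x^8-20*x₁^2*x^6+20*x₁^4*x^4-8*x₁^6*x^2+x₁^8) ≤ x^2*x₁^8 := by
  have hb : (0:ℝ) < x₁ := x₁_pos
  have hΨ : 0 ≤ 7*x^4-13*x₁^2*x^2+7*x₁^4 := by
    nlinarith [sq_nonneg (14*x^2-13*x₁^2), sq_nonneg (x₁^2)]
  have hle : x^2 ≤ x₁^2 := by nlinarith
  have hprod : 0 ≤ x^4*((x₁^2-x^2)*(7*x^4-13*x₁^2*x^2+7*x₁^4)) :=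
    mul_nonneg (pow_nonneg hx0 4) (mul_nonneg (sub_nonneg.mpr hle) hΨ)
  have hx16 : 0 ≤ x^4*x₁^6 := mul_nonneg (pow_nonneg hx0 4) (pow_nonneg hb.le 6)
  nlinarith [hprod, hx16]

lemma key_ineq2 {x : ℝ} (hx0 : 0 ≤ x) (hx1 : x ≤ x₁) :
    x^2*(21*x^8-50*x₁^2*x^6+40*x₁^4*x^4-12*x₁^6*x^2+x₁^8) ≤ x^2*x₁^8 := by
  have hb : (0:ℝ) < x₁ := x₁_pos
  have hΨ : 0 ≤ 21*x^4-29*x₁^2*x^2+11*x₁^4 := by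
    nlinarith [sq_nonneg (42*x^2-29*x₁^2), sq_nonneg (x₁^2)]
  have hle : x^2 ≤ x₁^2 := by nlinarith
  have hprod : 0 ≤ x^4*((x₁^2-x^2)*(21*x^4-29*x₁^2*x^2+11*x₁^4)) :=
    mul_nonneg (pow_nonneg hx0 4) (mul_nonneg (sub_nonneg.mpr hle) hΨ)
  have hx16 : 0 ≤ x^4*x₁^6 := mul_nonneg (pow_nonneg hx0 4) (pow_nonneg hb.le 6)
  nlinarith [hprod, hx16]

lemma eps_bound {ε A B : ℝ} (hε0 : 0 < ε) (hε1 : ε ≤ 1) (hAB : A ≤ B) (hB : 0 ≤ B) :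
    ε * A ≤ B := by
  nlinarith [mul_nonneg hε0.le (sub_nonneg.mpr hAB), mul_nonneg (sub_nonneg.mpr hε1) hB]

lemma p'_nonneg {ε x : ℝ} (hε0 : 0 < ε) (hε1 : ε ≤ 1) (hx0 : 0 ≤ x) (hx1 : x ≤ x₁) :
    0 ≤ p' ε x := by
  have hb8 : (0:ℝ) < x₁^8 := pow_pos x₁_pos 8
  rw [p', sub_nonneg, div_le_iff₀ hb8]
  have key := key_ineq hx0 hx1
  have key3 : x^3*(7*x^8-20*x₁^2*x^6+20*x₁^4*x^4-8*x₁^6*x^2+x₁^8) ≤ x^3*x₁^8 := by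
    nlinarith [mul_le_mul_of_nonneg_left key hx0]
  have hB : 0 ≤ x^3*x₁^8 := mul_nonneg (pow_nonneg hx0 3) hb8.le
  have := eps_bound hε0 hε1 key3 hB
  nlinarith [this]

lemma q'_nonneg {ε x : ℝ} (hε0 : 0 < ε) (hε1 : ε ≤ 1) (hx0 : 0 ≤ x) (hx1 : x ≤ x₁) :
    0 ≤ q' ε x := by
  have hb8 : (0:ℝ) < x₁^8 := pow_pos x₁_pos 8
  rw [q', sub_nonneg, div_le_iff₀ hb8]
  have key := key_ineq2 hx0 hx1
  have key3 : x^3*(21*x^8-50*x₁^2*x^6+40*x₁^4*x^4-12*x₁^6*x^2+x₁^8) ≤ x^3*x₁^8 := by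
    nlinarith [mul_le_mul_of_nonneg_left key hx0]
  have hB : 0 ≤ x^3*x₁^8 := mul_nonneg (pow_nonneg hx0 3) hb8.le
  have := eps_bound hε0 hε1 key3 hB
  nlinarith [this]

lemma q_x₁ (ε : ℝ) : q ε x₁ = 24 * x₁^4 := by
  rw [q]
  have h : x₁^4*(7*x₁^8-20*x₁^2*x₁^6+20*x₁^4*x₁^4-8*x₁^6*x₁^2+x₁^8) = 0 := by ring
  rw [h]
  ring

lemma monotoneOn_p {ε : ℝ} (hε0 : 0 < ε) (hε1 : ε ≤ 1) :
    MonotoneOn (p ε) (Icc 0 x₁) := by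
  apply monotoneOn_of_deriv_nonneg (convex_Icc _ _)
  · exact fun x hx => ((hasDerivAt_p ε x).continuousAt).continuousWithinAt
  · intro x hx
    exact (hasDerivAt_p ε x).differentiableAt.differentiableWithinAt
  · intro x hx
    rw [interior_Icc] at hx
    rw [(hasDerivAt_p ε x).deriv]
    exact p'_nonneg hε0 hε1 hx.1.le hx.2.le

lemma monotoneOn_S {ε : ℝ} (hε0 : 0 < ε) (hε1 : ε ≤ 1) :
    MonotoneOn (S ε) (Set.Ici 0) := by
  have hmono6 : ∀ x y : ℝ, 0 ≤ x → x ≤ y → 6*x^4 ≤ 6*y^4 := by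
    intro x y hx hxy
    have := pow_le_pow_left₀ hx hxy 4
    linarith
  have hp := monotoneOn_p hε0 hε1
  intro x hx y hy hxy
  simp only [mem_Ici] at hx hy
  rcases le_or_gt y x₁ with h | h
  · rw [S_eq_p ε (le_trans hxy h), S_eq_p ε h]
    exact hp ⟨hx, le_trans hxy h⟩ ⟨hy, h⟩ hxy
  · rcases le_or_gt x₁ x with h2 | h2
    · rw [S_eq_six ε h2, S_eq_six ε h.le]
      exact hmono6 x y hx hxy
    · rw [S_eq_p ε h2.le, S_eq_six ε h.le]
      calc p ε x ≤ p ε x₁ := hp ⟨hx, h2.le⟩ ⟨x₁_pos.le, le_refl _⟩ h2.le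
        _ = S ε x₁ := (S_eq_p ε (le_refl _)).symm
        _ = 6*x₁^4 := S_eq_six ε (le_refl _)
        _ ≤ 6*y^4 := hmono6 x₁ y x₁_pos.le h.le

lemma S_zero (ε : ℝ) : S ε 0 = 0 := by
  rw [S, if_pos x₁_pos]
  ring

lemma S_nonneg {ε : ℝ} (hε0 : 0 < ε) (hε1 : ε ≤ 1) :
    ∀ x ∈ Set.Ici (0:ℝ), 0 ≤ S ε x := by
  intro x hx
  have := monotoneOn_S hε0 hε1 (le_refl (0:ℝ)) hx hx
  rw [S_zero] at this
  exact this

/-- derivative of `s ↦ S ε (exp s)`. -/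
noncomputable def D (ε s : ℝ) : ℝ :=
  if Real.exp s < x₁ then q ε (Real.exp s) else 24 * (Real.exp s)^4

lemma hasDerivAt_hL (ε s : ℝ) :
    HasDerivAt (fun s => p ε (Real.exp s)) (p' ε (Real.exp s) * Real.exp s) s :=
  (hasDerivAt_p ε (Real.exp s)).comp s (Real.hasDerivAt_exp s)

lemma hasDerivAt_hR (s : ℝ) :
    HasDerivAt (fun s : ℝ => 6 * (Real.exp s)^4) (24 * (Real.exp s)^4) s := by
  have := ((Real.hasDerivAt_exp s).fun_pow 4).const_mul (6:ℝ)
  convert this using 1 <;> try rfl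
  push_cast
  ring

lemma hasDerivAt_Sexp (ε s : ℝ) :
    HasDerivAt (fun s => S ε (Real.exp s)) (D ε s) s := by
  rcases lt_trichotomy (Real.exp s) x₁ with h | h | h
  · have hev : (fun s => S ε (Real.exp s)) =ᶠ[nhds s] (fun s => p ε (Real.exp s)) := by
      have hopen : IsOpen {t : ℝ | Real.exp t < x₁} :=
        isOpen_lt Real.continuous_exp continuous_const
      filter_upwards [hopen.mem_nhds h] with t ht
      exact S_eq_p ε (le_of_lt ht)
    have := (hasDerivAt_hL ε s).congr_of_eventuallyEq hev
    rw [D, if_pos h, q_eq]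
    exact this
  · -- boundary point
    have hL : HasDerivWithinAt (fun s => S ε (Real.exp s)) (24 * x₁^4) (Iic s) s := by
      have h1 : HasDerivWithinAt (fun s => p ε (Real.exp s)) (24 * x₁^4) (Iic s) s := by
        have := (hasDerivAt_hL ε s).hasDerivWithinAt (s := Iic s)
        rw [h] at this
        rwa [show p' ε x₁ * x₁ = 24 * x₁^4 by rw [← q_eq, q_x₁]] at this
      apply h1.congr
      · intro t ht
        exact S_eq_p ε (by rw [← h]; exact Real.exp_le_exp.mpr ht)
      · exact S_eq_p ε (le_of_eq h)
    have hR : HasDerivWithinAt (fun s => S ε (Real.exp s)) (24 * x₁^4) (Ici s) s := by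
      have h1 : HasDerivWithinAt (fun s : ℝ => 6 * (Real.exp s)^4) (24 * x₁^4) (Ici s) s := by
        have := (hasDerivAt_hR s).hasDerivWithinAt (s := Ici s)
        rwa [h] at this
      apply h1.congr
      · intro t ht
        exact S_eq_six ε (by rw [← h]; exact Real.exp_le_exp.mpr ht)
      · exact S_eq_six ε (le_of_eq h.symm)
    have := hL.union hR
    rw [Iic_union_Ici, hasDerivWithinAt_univ] at this
    rw [D, if_neg (lt_irrefl _ ∘ (h ▸ ·)), h]
    · exact this
  · have hev : (fun s => S ε (Real.exp s)) =ᶠ[nhds s] (fun s : ℝ => 6 * (Real.exp s)^4) := by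
      have hopen : IsOpen {t : ℝ | x₁ < Real.exp t} :=
        isOpen_lt continuous_const Real.continuous_exp
      filter_upwards [hopen.mem_nhds h] with t ht
      exact S_eq_six ε (le_of_lt ht)
    have := (hasDerivAt_hR s).congr_of_eventuallyEq hev
    rw [D, if_neg (not_lt.mpr h.le)]
    exact this

lemma monotone_D {ε : ℝ} (hε0 : 0 < ε) (hε1 : ε ≤ 1) : Monotone (D ε) := by
  set a := Real.log x₁ with ha
  have hexpa : Real.exp a = x₁ := Real.exp_log x₁_pos
  have hDL : EqOn (fun s => q ε (Real.exp s)) (D ε) (Iic a) := by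
    intro s hs
    rcases lt_or_eq_of_le (mem_Iic.mp hs) with h | h
    · have : Real.exp s < x₁ := by rw [← hexpa]; exact Real.exp_lt_exp.mpr h
      simp only [D, if_pos this]
    · subst h
      simp only [D, hexpa, if_neg (lt_irrefl _), q_x₁]
  have hmL : MonotoneOn (fun s => q ε (Real.exp s)) (Iic a) := by
    apply monotoneOn_of_deriv_nonneg (convex_Iic a)
    · exact fun s _ =>
        (((hasDerivAt_q ε (Real.exp s)).comp s (Real.hasDerivAt_exp s)).continuousAt).continuousWithinAt
    · exact fun s _ =>
        ((hasDerivAt_q ε (Real.exp s)).comp s (Real.hasDerivAt_exp s)).differentiableAt.differentiableWithinAt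
    · intro s hs
      rw [interior_Iic] at hs
      have hda : HasDerivAt (fun s => q ε (Real.exp s)) (q' ε (Real.exp s) * Real.exp s) s :=
        (hasDerivAt_q ε (Real.exp s)).comp s (Real.hasDerivAt_exp s)
      rw [hda.deriv]
      have hle : Real.exp s ≤ x₁ := by
        rw [← hexpa]; exact (Real.exp_lt_exp.mpr hs).le
      exact mul_nonneg (q'_nonneg hε0 hε1 (Real.exp_pos s).le hle) (Real.exp_pos s).le
  have hmonoL : MonotoneOn (D ε) (Iic a) := hmL.congr hDL
  have hmonoR : MonotoneOn (D ε) (Ici a) := by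
    intro s hs t ht hst
    have hse : x₁ ≤ Real.exp s := by rw [← hexpa]; exact Real.exp_le_exp.mpr hs
    have hte : x₁ ≤ Real.exp t := by rw [← hexpa]; exact Real.exp_le_exp.mpr ht
    simp only [D, if_neg (not_lt.mpr hse), if_neg (not_lt.mpr hte)]
    have h1 : Real.exp s ≤ Real.exp t := Real.exp_le_exp.mpr hst
    have := pow_le_pow_left₀ (Real.exp_pos s).le h1 4
    linarith
  intro s t hst
  rcases le_total t a with h | h
  · exact hmonoL (mem_Iic.mpr (le_trans hst h)) (mem_Iic.mpr h) hst
  · rcases le_total s a with h2 | h2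
    · exact le_trans (hmonoL h2 (mem_Iic.mpr le_rfl) h2) (hmonoR (mem_Ici.mpr le_rfl) h h)
    · exact hmonoR (mem_Ici.mpr h2) (mem_Ici.mpr h) hst

lemma convexOn_Sexp {ε : ℝ} (hε0 : 0 < ε) (hε1 : ε ≤ 1) :
    ConvexOn ℝ Set.univ (fun x => S ε (Real.exp x)) := by
  have hdiff : Differentiable ℝ (fun s => S ε (Real.exp s)) :=
    fun s => (hasDerivAt_Sexp ε s).differentiableAt
  have hd : deriv (fun s => S ε (Real.exp s)) = D ε :=
    funext fun s => (hasDerivAt_Sexp ε s).deriv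
  exact Monotone.convexOn_univ_of_deriv hdiff (hd ▸ monotone_D hε0 hε1)

/-- antiderivative of `x ↦ p ε (t*x) * x`. -/
noncomputable def A (ε t x : ℝ) : ℝ :=
  t^4*x^6 - ε*(t^4*(x^6*(t^2*x^2-x₁^2)^4))/x₁^8

lemma hasDerivAt_A (ε t x : ℝ) : HasDerivAt (A ε t) (p ε (t*x) * x) x := by
  have h2 : HasDerivAt (fun x : ℝ => (t^2*x^2-x₁^2)^4)
      ((4:ℕ)*(t^2*x^2-x₁^2)^3*(t^2*((2:ℕ)*x^1))) x :=
    (((hasDerivAt_pow 2 x).const_mul (t^2)).sub_const (x₁^2)).pow 4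
  have h3 : HasDerivAt (fun x : ℝ => x^6*(t^2*x^2-x₁^2)^4)
      ((6:ℕ)*x^5*(t^2*x^2-x₁^2)^4 + x^6*((4:ℕ)*(t^2*x^2-x₁^2)^3*(t^2*((2:ℕ)*x^1)))) x :=
    (hasDerivAt_pow 6 x).mul h2
  have h4 := ((hasDerivAt_pow 6 x).const_mul (t^4)).sub
    (((h3.const_mul (t^4)).const_mul ε).div_const (x₁^8))
  have h5 : HasDerivAt (A ε t)
      (t^4*((6:ℕ)*x^5) - ε*(t^4*((6:ℕ)*x^5*(t^2*x^2-x₁^2)^4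
        + x^6*((4:ℕ)*(t^2*x^2-x₁^2)^3*(t^2*((2:ℕ)*x^1)))))/x₁^8) x := h4
  convert h5 using 1
  rw [p]
  push_cast
  field_simp [x₁_pow8_ne]
  ring

lemma integrand_cont (ε t : ℝ) : Continuous (fun x => S ε (t*x) * x) :=
  ((continuous_S ε).comp (continuous_const.mul continuous_id)).mul continuous_id

lemma pow4_nonneg (y : ℝ) : 0 ≤ y^4 := by
  have : y^4 = (y^2)^2 := by ring
  rw [this]; exact sq_nonneg _

lemma constraint_integral {ε : ℝ} (hε0 : 0 < ε) (hε1 : ε ≤ 1) :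
    ∀ t : ℝ, 0 ≤ t → (∫ x in (0:ℝ)..1, S ε (t * x) * x) ≤ t ^ 4 := by
  intro t ht
  have hII : IntervalIntegrable (fun x => S ε (t*x) * x) volume 0 1 :=
    (integrand_cont ε t).intervalIntegrable 0 1
  rcases le_or_gt t x₁ with hcase | hcase
  · -- t ≤ x₁ : on all of [0,1], t*x ≤ x₁
    have heq : ∫ x in (0:ℝ)..1, S ε (t * x) * x = A ε t 1 - A ε t 0 := by
      apply intervalIntegral.integral_eq_sub_of_hasDerivAt
      · intro x hx
        rw [uIcc_of_le zero_le_one] at hx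
        have htx : t * x ≤ x₁ := by
          calc t * x ≤ t * 1 := by nlinarith [hx.1, hx.2]
            _ = t := mul_one t
            _ ≤ x₁ := hcase
        rw [S_eq_p ε htx]
        exact hasDerivAt_A ε t x
      · exact hII
    rw [heq]
    have h0 : A ε t 0 = 0 := by rw [A]; ring
    have h1 : A ε t 1 = t^4 - ε*(t^4*((t^2-x₁^2)^4))/x₁^8 := by rw [A]; ring
    rw [h0, h1]
    have hnn : 0 ≤ ε*(t^4*((t^2-x₁^2)^4))/x₁^8 :=
      div_nonneg (mul_nonneg hε0.le (mul_nonneg (pow4_nonneg t) (pow4_nonneg _)))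
        (pow_nonneg x₁_pos.le 8)
    linarith
  · -- x₁ < t
    have ht0 : 0 < t := lt_trans x₁_pos hcase
    set c := x₁ / t with hc
    have hc0 : 0 < c := div_pos x₁_pos ht0
    have hc1 : c < 1 := (div_lt_one ht0).mpr hcase
    have htc : t * c = x₁ := by rw [hc]; field_simp
    have hsplit := intervalIntegral.integral_add_adjacent_intervals
      (μ := volume) (f := fun x => S ε (t*x)*x) (a := (0:ℝ)) (b := c) (c := (1:ℝ))
      ((integrand_cont ε t).intervalIntegrable 0 c) ((integrand_cont ε t).intervalIntegrable c 1)
    rw [← hsplit]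
    have heq1 : ∫ x in (0:ℝ)..c, S ε (t * x) * x = A ε t c - A ε t 0 := by
      apply intervalIntegral.integral_eq_sub_of_hasDerivAt
      · intro x hx
        rw [uIcc_of_le hc0.le] at hx
        have htx : t * x ≤ x₁ := by
          rw [← htc]
          exact mul_le_mul_of_nonneg_left hx.2 ht0.le
        rw [S_eq_p ε htx]
        exact hasDerivAt_A ε t x
      · exact (integrand_cont ε t).intervalIntegrable 0 c
    have heq2 : ∫ x in c..(1:ℝ), S ε (t * x) * x = t^4*1^6 - t^4*c^6 := by
      apply intervalIntegral.integral_eq_sub_of_hasDerivAt (f := fun x => t^4*x^6)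
      · intro x hx
        rw [uIcc_of_le hc1.le] at hx
        have htx : x₁ ≤ t * x := by
          rw [← htc]
          exact mul_le_mul_of_nonneg_left hx.1 ht0.le
        rw [S_eq_six ε htx]
        have hder := (hasDerivAt_pow 6 x).const_mul (t^4)
        convert hder using 1 <;> try rfl
        push_cast
        ring
      · exact (integrand_cont ε t).intervalIntegrable c 1
    rw [heq1, heq2]
    have h0 : A ε t 0 = 0 := by rw [A]; ring
    have hAc : A ε t c = t^4*c^6 := by
      rw [A]
      have hz : t^2*c^2 - x₁^2 = 0 := by
        rw [show t^2*c^2 = (t*c)^2 by ring, htc]; ring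
      rw [hz]
      ring
    rw [h0, hAc]
    ring_nf
    linarith [le_refl (t^4)]

noncomputable def base (t : ℝ) : ℝ := 6*t^11/(1+t^8)^2

lemma one_add_pow8_pos (t : ℝ) : 0 < 1 + t^8 := by positivity

lemma one_add_pow8_ne (t : ℝ) : 1 + t^8 ≠ 0 := ne_of_gt (one_add_pow8_pos t)

noncomputable def Hfun (t : ℝ) : ℝ := 3/4*(Real.arctan (t^4) - t^4/(1+t^8))

lemma hasDerivAt_Hfun (t : ℝ) : HasDerivAt Hfun (base t) t := by
  have h1 : HasDerivAt (fun t : ℝ => Real.arctan (t^4))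
      (1/(1+(t^4)^2) * ((4:ℕ)*t^3)) t :=
    by simpa using (hasDerivAt_pow 4 t).arctan
  have h2 : HasDerivAt (fun t : ℝ => t^4/(1+t^8))
      (((4:ℕ)*t^3*(1+t^8) - t^4*((8:ℕ)*t^7))/(1+t^8)^2) t := by
    have hd : HasDerivAt (fun t : ℝ => 1+t^8) ((8:ℕ)*t^7) t := by
      have := (hasDerivAt_pow 8 t).const_add (1:ℝ)
      convert this using 1
    exact (hasDerivAt_pow 4 t).div hd (one_add_pow8_ne t)
  have h3 := (h1.sub h2).const_mul (3/4 : ℝ)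
  convert h3 using 1 <;> try rfl
  rw [base]
  have h8 : (1:ℝ)+(t^4)^2 = 1+t^8 := by ring
  rw [h8]
  field_simp
  ring

lemma base_nonneg {t : ℝ} (ht : 0 < t) : 0 ≤ base t := by
  rw [base]
  positivity

lemma tendsto_Hfun : Filter.Tendsto Hfun Filter.atTop (nhds (3*π/8)) := by
  have h1 : Filter.Tendsto (fun t : ℝ => Real.arctan (t^4)) Filter.atTop (nhds (π/2)) := by
    have hp : Filter.Tendsto (fun t : ℝ => t^4) Filter.atTop Filter.atTop :=
      Filter.tendsto_pow_atTop (by norm_num)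
    exact (Real.tendsto_arctan_atTop.mono_right nhdsWithin_le_nhds).comp hp
  have h2 : Filter.Tendsto (fun t : ℝ => t^4/(1+t^8)) Filter.atTop (nhds 0) := by
    have hp : Filter.Tendsto (fun t : ℝ => t^4) Filter.atTop Filter.atTop :=
      Filter.tendsto_pow_atTop (by norm_num)
    have hinv : Filter.Tendsto (fun t : ℝ => (t^4)⁻¹) Filter.atTop (nhds 0) :=
      tendsto_inv_atTop_zero.comp hp
    apply tendsto_of_tendsto_of_tendsto_of_le_of_le' tendsto_const_nhds hinv
    · filter_upwards [Filter.eventually_ge_atTop (1:ℝ)] with t ht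
      have ht0 : (0:ℝ) < t := lt_of_lt_of_le one_pos ht
      positivity
    · filter_upwards [Filter.eventually_ge_atTop (1:ℝ)] with t ht
      have ht0 : (0:ℝ) < t := lt_of_lt_of_le one_pos ht
      rw [inv_eq_one_div, div_le_div_iff₀ (one_add_pow8_pos t) (by positivity : (0:ℝ) < t^4)]
      nlinarith [pow_pos ht0 4, pow_pos ht0 8]
  have h3 := (h1.sub h2).const_mul (3/4 : ℝ)
  simp only [sub_zero] at h3
  have heq : 3*π/8 = 3/4*(π/2) := by ring
  rw [heq]
  exact h3

lemma integral_base : ∫ t in Set.Ioi (0:ℝ), base t = 3*π/8 := by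
  have h := integral_Ioi_of_hasDerivAt_of_nonneg
    (g := Hfun) (g' := base) (a := 0) (l := 3*π/8)
    (hasDerivAt_Hfun 0).continuousAt.continuousWithinAt
    (fun x _ => hasDerivAt_Hfun x) (fun x hx => base_nonneg hx) tendsto_Hfun
  rw [h]
  have : Hfun 0 = 0 := by
    rw [Hfun]
    norm_num
  rw [this, sub_zero]

lemma integrableOn_base : IntegrableOn base (Set.Ioi (0:ℝ)) volume :=
  integrableOn_Ioi_deriv_of_nonneg (hasDerivAt_Hfun 0).continuousAt.continuousWithinAt
    (fun x _ => hasDerivAt_Hfun x) (fun x hx => base_nonneg hx) tendsto_Hfun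

noncomputable def jfun (t : ℝ) : ℝ :=
  t^11*(7*t^2-3*x₁^2)*(t^2-x₁^2)^3/(3*x₁^8*(1+t^8)^2)

noncomputable def kfun (t : ℝ) : ℝ :=
  t^11*(t^2-x₁^2)^4*(6-10*t^8)/(6*x₁^8*(1+t^8)^3)

noncomputable def Qfun (t : ℝ) : ℝ :=
  t^12*(t^2-x₁^2)^4/(6*x₁^8*(1+t^8)^2)

lemma denom_ne (a : ℝ) (n : ℕ) (t : ℝ) (ha : 0 < a) : a*x₁^8*(1+t^8)^n ≠ 0 := by
  have h1 : (0:ℝ) < x₁^8 := pow_pos x₁_pos 8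
  have h2 : (0:ℝ) < (1+t^8)^n := pow_pos (one_add_pow8_pos t) n
  positivity

lemma continuous_jfun : Continuous jfun := by
  apply Continuous.div (by fun_prop) (by fun_prop)
  exact fun t => denom_ne 3 2 t (by norm_num)

lemma continuous_kfun : Continuous kfun := by
  apply Continuous.div (by fun_prop) (by fun_prop)
  exact fun t => denom_ne 6 3 t (by norm_num)

lemma hasDerivAt_Qfun (t : ℝ) : HasDerivAt Qfun (jfun t + kfun t) t := by
  have hN : HasDerivAt (fun t : ℝ => t^12*(t^2-x₁^2)^4)
      ((12:ℕ)*t^11*(t^2-x₁^2)^4 + t^12*((4:ℕ)*(t^2-x₁^2)^3*((2:ℕ)*t^1))) t :=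
    (hasDerivAt_pow 12 t).mul (((hasDerivAt_pow 2 t).sub_const (x₁^2)).pow 4)
  have hD : HasDerivAt (fun t : ℝ => 6*x₁^8*(1+t^8)^2)
      (6*x₁^8*((2:ℕ)*(1+t^8)^1*((8:ℕ)*t^7))) t := by
    exact ((((hasDerivAt_pow 8 t).const_add (1:ℝ)).pow 2).const_mul (6*x₁^8))
  have h := hN.div hD (denom_ne 6 2 t (by norm_num))
  convert h using 1 <;> try rfl
  rw [jfun, kfun]
  have h8 : x₁ ^ (8:ℕ) ≠ 0 := x₁_pow8_ne
  field_simp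
  ring

lemma jfun_integral_neg : (∫ t in (0:ℝ)..x₁, jfun t) < 0 := by
  have hjk : ∫ t in (0:ℝ)..x₁, (jfun t + kfun t) = Qfun x₁ - Qfun 0 := by
    apply intervalIntegral.integral_eq_sub_of_hasDerivAt
    · exact fun t _ => hasDerivAt_Qfun t
    · exact (continuous_jfun.add continuous_kfun).intervalIntegrable 0 x₁
  have hQ1 : Qfun x₁ = 0 := by
    rw [Qfun, show x₁^2 - x₁^2 = 0 by ring]
    ring
  have hQ0 : Qfun 0 = 0 := by
    rw [Qfun]
    norm_num
  rw [intervalIntegral.integral_add (continuous_jfun.intervalIntegrable 0 x₁)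
    (continuous_kfun.intervalIntegrable 0 x₁), hQ1, hQ0, sub_zero] at hjk
  have hkpos : 0 < ∫ t in (0:ℝ)..x₁, kfun t := by
    apply intervalIntegral.intervalIntegral_pos_of_pos_on
      (continuous_kfun.intervalIntegrable 0 x₁) _ x₁_pos
    intro t ht
    rw [kfun]
    have ht0 : 0 < t := ht.1
    have ht1 : t < x₁ := ht.2
    have h1 : 0 < t^11 := pow_pos ht0 11
    have h2 : 0 < (t^2-x₁^2)^4 := by
      have : t^2 - x₁^2 ≠ 0 := by nlinarith
      positivity
    have h3 : 0 < 6-10*t^8 := by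
      have : t^8 < x₁^8 := pow_lt_pow_left₀ ht1 ht0.le (by norm_num)
      rw [x₁_pow8] at this
      linarith
    have h4 : 0 < 6*x₁^8*(1+t^8)^3 := by
      have := pow_pos x₁_pos 8
      have := pow_pos (one_add_pow8_pos t) 3
      positivity
    positivity
  linarith

lemma grand_integral {ε : ℝ} (hε0 : 0 < ε) (hε1 : ε ≤ 1) :
    3 * π / 8 < ∫ t in Set.Ioi (0:ℝ), S ε t * t^7 / (1 + t^8)^2 := by
  set F := fun t : ℝ => S ε t * t^7 / (1 + t^8)^2 with hF
  have hcontF : Continuous F := by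
    apply Continuous.div ((continuous_S ε).mul (by fun_prop)) (by fun_prop)
    exact fun t => pow_ne_zero 2 (one_add_pow8_ne t)
  have hFIoc : IntegrableOn F (Ioc 0 x₁) volume :=
    (hcontF.continuousOn.integrableOn_Icc).mono_set Ioc_subset_Icc_self
  have hEqIoi : EqOn F base (Ioi x₁) := by
    intro t ht
    rw [hF]
    simp only
    rw [S_eq_six ε (le_of_lt ht), base]
    ring
  have hbaseIoi : IntegrableOn base (Set.Ioi x₁) volume :=
    integrableOn_base.mono_set (Ioi_subset_Ioi x₁_pos.le)
  have hbaseIoc : IntegrableOn base (Set.Ioc 0 x₁) volume :=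
    integrableOn_base.mono_set Ioc_subset_Ioi_self
  have hFIoi : IntegrableOn F (Set.Ioi x₁) volume :=
    hbaseIoi.congr_fun (fun t ht => (hEqIoi ht).symm) measurableSet_Ioi
  have hunion : Ioc (0:ℝ) x₁ ∪ Ioi x₁ = Ioi 0 := Ioc_union_Ioi_eq_Ioi x₁_pos.le
  have hsplitF : ∫ t in Set.Ioi (0:ℝ), F t
      = (∫ t in Set.Ioc (0:ℝ) x₁, F t) + ∫ t in Set.Ioi x₁, F t := by
    rw [← hunion, setIntegral_union (Ioc_disjoint_Ioi le_rfl) measurableSet_Ioi hFIoc hFIoi]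
  have hsplitB : (3:ℝ)*π/8
      = (∫ t in Set.Ioc (0:ℝ) x₁, base t) + ∫ t in Set.Ioi x₁, base t := by
    rw [← integral_base, ← hunion,
      setIntegral_union (Ioc_disjoint_Ioi le_rfl) measurableSet_Ioi hbaseIoc hbaseIoi]
  have hIoiEq : ∫ t in Set.Ioi x₁, F t = ∫ t in Set.Ioi x₁, base t :=
    setIntegral_congr_fun measurableSet_Ioi hEqIoi
  have hEqIoc : EqOn F (fun t => base t - (6*ε) * jfun t) (Ioc 0 x₁) := by
    intro t ht
    rw [hF]
    simp only
    rw [S_eq_p ε ht.2, p, base, jfun]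
    have h8 : x₁ ^ (8:ℕ) ≠ 0 := x₁_pow8_ne
    have h18 : (1+t^8) ≠ 0 := one_add_pow8_ne t
    field_simp
    ring
  have hjIoc : IntegrableOn (fun t => (6*ε) * jfun t) (Set.Ioc 0 x₁) volume :=
    (((continuous_const.mul continuous_jfun)).continuousOn.integrableOn_Icc).mono_set
      Ioc_subset_Icc_self
  have hIocEq : ∫ t in Set.Ioc (0:ℝ) x₁, F t
      = (∫ t in Set.Ioc (0:ℝ) x₁, base t) - (6*ε) * ∫ t in Set.Ioc (0:ℝ) x₁, jfun t := by
    rw [setIntegral_congr_fun measurableSet_Ioc hEqIoc, integral_sub hbaseIoc hjIoc,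
      integral_const_mul]
  have hJ : ∫ t in Set.Ioc (0:ℝ) x₁, jfun t < 0 := by
    rw [← intervalIntegral.integral_of_le x₁_pos.le]
    exact jfun_integral_neg
  have hpos : 0 < -((6*ε) * ∫ t in Set.Ioc (0:ℝ) x₁, jfun t) := by
    have : (6*ε) * ∫ t in Set.Ioc (0:ℝ) x₁, jfun t < 0 :=
      mul_neg_of_pos_of_neg (by linarith) hJ
    linarith
  rw [hsplitF, hIocEq, hIoiEq]
  rw [hsplitB]
  linarith

theorem S_counterexample (ε : ℝ) (hε0 : 0 < ε) (hε1 : ε ≤ 1) :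
    (∀ x ∈ Set.Ici (0:ℝ), 0 ≤ S ε x) ∧
    MonotoneOn (S ε) (Set.Ici 0) ∧
    ConvexOn ℝ Set.univ (fun x => S ε (Real.exp x)) ∧
    (∀ t : ℝ, 0 ≤ t → (∫ x in (0:ℝ)..1, S ε (t * x) * x) ≤ t ^ 4) ∧
    3 * π / 8 < ∫ t in Set.Ioi (0:ℝ), S ε t * t^7 / (1 + t^8)^2 :=
  ⟨S_nonneg hε0 hε1, monotoneOn_S hε0 hε1, convexOn_Sexp hε0 hε1,
    constraint_integral hε0 hε1, grand_integral hε0 hε1⟩
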